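/- Let A be a (not necessarily unital) associative algebra satisfying a_1⋯a_n = a_{σ(1)}⋯a_{σ(n)} for some σ ∈ S_n with σ(1) = i ≠ 1. Then A satisfies the degree-(n+1) identity corresponding to the cycle (1 2 ... i): for all a_1,...,a_{n+1} ∈ A, a_1 a_2 ⋯ a_{n+1} = a_2 a_3 ⋯ a_i a_1 a_{i+1} ⋯ a_{n+1}. -/

import Mathlib

/-- Product of a nonempty list in a (non-unital) multiplicative structure;
junk value `0` for the empty list. -/
def listMul {A : Type*} [Mul A] [Zero A] : List A → A
  | [] => 0
  | [x] => x
  | x :: y :: l => x * listMul (y :: l)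

/-- The product `a 0 * a 1 * ⋯ * a (k-1)`. -/
def finProd {A : Type*} [Mul A] [Zero A] {k : ℕ} (a : Fin k → A) : A :=
  listMul (List.ofFn a)

lemma finProd_head {A : Type*} [Mul A] [Zero A] {k : ℕ} (a : Fin (k + 2) → A) :
    finProd a = a 0 * finProd (fun j : Fin (k + 1) => a j.succ) := by
  simp only [finProd, List.ofFn_succ]
  rfl

lemma finProd_merge {A : Type*} [Semigroup A] [Zero A] : ∀ {k : ℕ} (e : Fin (k + 2) → A)
    (p : Fin (k + 1)),
    finProd e = finProd (fun j : Fin (k + 1) =>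
      if j = p then e p.castSucc * e p.succ
      else if (j : ℕ) < (p : ℕ) then e j.castSucc else e j.succ)
  | 0, e, p => by
    have hp : p = 0 := Fin.fin_one_eq_zero p
    subst hp
    simp [finProd, List.ofFn_succ, listMul]
  | k + 1, e, p => by
    induction p using Fin.cases with
    | zero =>
      rw [finProd_head e, finProd_head (fun j : Fin (k + 2) => e j.succ), ← mul_assoc]
      rw [finProd_head]
      congr 1
    | succ q =>
      rw [finProd_head e, finProd_merge (fun j : Fin (k + 2) => e j.succ) q, finProd_head]
      congr 1
      · simp [(Fin.succ_ne_zero q).symm]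

theorem cycle_identity_degree_succ {F A : Type*} [Field F] [NonUnitalRing A] [Module F A]
    [SMulCommClass F A A] [IsScalarTower F A A]
    (n : ℕ) (σ : Equiv.Perm (Fin (n + 1))) (hσ : σ 0 ≠ 0)
    (hid : ∀ b : Fin (n + 1) → A, finProd b = finProd (fun i => b (σ i))) :
    ∀ a : Fin (n + 2) → A,
      finProd a = finProd (fun j => a (Fin.cycleRange ((σ 0).castSucc) j)) := by
  obtain ⟨m, rfl⟩ : ∃ m, n = m + 1 := by
    cases n with
    | zero => exact absurd (Fin.fin_one_eq_zero (σ 0)) hσ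
    | succ m => exact ⟨m, rfl⟩
  intro a
  set i : Fin (m + 2) := σ 0 with hi
  set b : Fin (m + 2) → A := fun j => a j.succ with hb
  set c : Fin (m + 2) → A := fun j => if j = 0 then a 0 * b i else b (σ j) with hc
  have h1 : finProd a = a 0 * finProd b := finProd_head a
  have h2 : finProd b = finProd (fun j => b (σ j)) := hid b
  have h3 : a 0 * finProd (fun j => b (σ j)) = finProd c := by
    rw [finProd_head (fun j : Fin (m + 2) => b (σ j)), finProd_head c]
    have hc0 : c 0 = a 0 * b i := by simp [hc]
    have hct : (fun j : Fin (m + 1) => c j.succ) = fun j : Fin (m + 1) => b (σ j.succ) := by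
      funext j
      simp [hc, Fin.succ_ne_zero]
    rw [hc0, hct, mul_assoc, hi]
  have h4 : finProd c = finProd (fun j => c (σ⁻¹ j)) := by
    have := hid (fun j => c (σ⁻¹ j))
    simpa using this.symm
  have h5 : (fun j => c (σ⁻¹ j)) = fun j : Fin (m + 2) =>
      if j = i then a 0 * a i.succ else a j.succ := by
    funext j
    by_cases h : j = i
    · subst h
      simp [hc, hb, hi]
    · have h' : σ⁻¹ j ≠ 0 := by
        intro h0
        apply h
        rw [hi, ← h0, Equiv.Perm.inv_def, Equiv.apply_symm_apply]
      simp [hc, show σ.symm j ≠ 0 from h', hb, h, Equiv.apply_symm_apply]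
  have h6 : finProd (fun j : Fin (m + 3) => a (Fin.cycleRange i.castSucc j)) =
      finProd (fun j : Fin (m + 2) => if j = i then a 0 * a i.succ else a j.succ) := by
    rw [finProd_merge (fun j : Fin (m + 3) => a (Fin.cycleRange i.castSucc j)) i]
    congr 1
    funext j
    by_cases h : j = i
    · subst h
      simp only [if_pos rfl]
      rw [Fin.cycleRange_self, Fin.cycleRange_of_gt (Fin.castSucc_lt_succ : i.castSucc < i.succ)]
      simp
    · simp only [if_neg h]
      by_cases h3 : (j : ℕ) < (i : ℕ)
      · have hlt : j.castSucc < i.castSucc := by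
          rw [Fin.castSucc_lt_castSucc_iff]; exact h3
        simp only [if_pos h3]
        rw [Fin.cycleRange_of_lt hlt, Fin.coeSucc_eq_succ]
      · have hgt : i.castSucc < j.succ := by
          have : (i : ℕ) < (j : ℕ) + 1 := by omega
          simpa [Fin.lt_def] using this
        simp only [if_neg h3]
        rw [Fin.cycleRange_of_gt hgt]
  rw [h1, h2, h3, h4, h5, h6]
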